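/- Let n ≥ 2. The number of (⊙,∨)-derivations on the n-element MV-chain L_n, i.e. the cardinality of the set of maps d : Fin n → Fin n satisfying d(a ⊙ b) = max(d(a) ⊙ b, a ⊙ d(b)) for all a, b, equals (n−1)(n+2)/2. -/

import Mathlib

/-- Łukasiewicz conjunction on the n-element MV-chain modeled on `Fin n`:
`a ⊙ b = (a + b) ∸ (n - 1)` (truncated subtraction). -/
def codot {n : ℕ} (a b : Fin n) : Fin n :=
  ⟨a.1 + b.1 - (n - 1), by have ha := a.2; have hb := b.2; omega⟩

/-- `d` is an `(⊙,∨)`-derivation on the MV-chain `Fin n`: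
`d (a ⊙ b) = (d a ⊙ b) ∨ (a ⊙ d b)` for all `a, b`. -/
def IsChainDer {n : ℕ} (d : Fin n → Fin n) : Prop :=
  ∀ a b : Fin n, d (codot a b) = max (codot (d a) b) (codot a (d b))

lemma val_max' {n : ℕ} (a b : Fin n) : (max a b).1 = max a.1 b.1 := by
  rcases le_total a b with h | h
  · rw [max_eq_right h, Nat.max_eq_right (Fin.le_def.mp h)]
  · rw [max_eq_left h, Nat.max_eq_left (Fin.le_def.mp h)]

lemma der_form {n : ℕ} (hn : 2 ≤ n) (k c : ℕ) (hk : k ≤ n - 2) (hc : c ≤ n - 1 - k) :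
    IsChainDer (fun x : Fin n =>
      if x.1 = n - 1 then (⟨c, by omega⟩ : Fin n) else ⟨x.1 - k, by have := x.2; omega⟩) := by
  intro a b
  have ha := a.2; have hb := b.2
  apply Fin.ext
  rw [val_max']
  dsimp only [codot]
  split_ifs <;> simp only [Fin.val_mk] <;> omega

lemma der_char {n : ℕ} (hn : 2 ≤ n) (d : Fin n → Fin n) (hd : IsChainDer d) :
    ∃ k c : ℕ, k ≤ n - 2 ∧ c ≤ n - 1 - k ∧
      ∀ x : Fin n, (d x).1 = if x.1 = n - 1 then c else x.1 - k := by
  have hn1 : n - 1 < n := by omega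
  have hn2 : n - 2 < n := by omega
  have h01 : (0 : ℕ) < n := by omega
  have h11 : (1 : ℕ) < n := by omega
  have dcong : ∀ (x y : ℕ) (hx : x < n) (hy : y < n), x = y →
      (d ⟨x, hx⟩).1 = (d ⟨y, hy⟩).1 := by
    intro x y hx hy e
    subst e
    rfl
  have hval2 : ∀ (x y v : ℕ) (hx : x < n) (hy : y < n) (hv : v < n),
      x + y - (n - 1) = v →
      (d ⟨v, hv⟩).1 = max ((d ⟨x, hx⟩).1 + y - (n - 1)) (x + (d ⟨y, hy⟩).1 - (n - 1)) := by
    intro x y v hx hy hv hveq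
    have h := congrArg Fin.val (hd ⟨x, hx⟩ ⟨y, hy⟩)
    rw [val_max'] at h
    have harg : codot (⟨x, hx⟩ : Fin n) ⟨y, hy⟩ = ⟨v, hv⟩ := Fin.ext hveq
    rw [harg] at h
    exact h
  -- d 0 = 0
  have h0 : (d ⟨0, h01⟩).1 = 0 := by
    have h := hval2 0 0 0 h01 h01 h01 (by omega)
    have hb := (d (⟨0, h01⟩ : Fin n)).2
    omega
  -- d (n-2) ≤ n-2
  have h1 : (d ⟨n - 2, hn2⟩).1 ≤ n - 2 := by
    have h := hval2 (n - 2) 1 0 hn2 h11 h01 (by omega)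
    have hb := (d (⟨n - 2, hn2⟩ : Fin n)).2
    omega
  obtain ⟨k, hk, hdn2⟩ : ∃ k, k ≤ n - 2 ∧ (d ⟨n - 2, hn2⟩).1 = n - 2 - k :=
    ⟨n - 2 - (d ⟨n - 2, hn2⟩).1, by omega, by omega⟩
  -- main claim: downward induction
  have main : ∀ j, j ≤ n - 2 → ∀ (h : n - 2 - j < n), (d ⟨n - 2 - j, h⟩).1 = (n - 2 - j) - k := by
    intro j
    induction j with
    | zero =>
      intro _ h
      rw [dcong (n - 2 - 0) (n - 2) h hn2 (by omega), hdn2]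
      omega
    | succ m ih =>
      intro hm h
      have hx : n - 2 - m < n := by omega
      have heq := hval2 (n - 2 - m) (n - 2) (n - 2 - (m + 1)) hx hn2 h (by omega)
      have hprev := ih (by omega) hx
      rw [heq, hprev, hdn2]
      omega
  obtain ⟨c, hcdef⟩ : ∃ c, (d ⟨n - 1, hn1⟩).1 = c := ⟨_, rfl⟩
  have hc : c ≤ n - 1 - k := by
    have h := hval2 (n - 1) (n - 2) (n - 2) hn1 hn2 hn2 (by omega)
    rw [hdn2, hcdef] at h
    omega
  refine ⟨k, c, hk, hc, ?_⟩
  intro x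
  by_cases hx : x.1 = n - 1
  · rw [if_pos hx]
    have hxe : x = ⟨n - 1, hn1⟩ := Fin.ext hx
    rw [hxe, hcdef]
  · rw [if_neg hx]
    have hxle : x.1 ≤ n - 2 := by have := x.2; omega
    obtain ⟨j, hjle, hj⟩ : ∃ j, j ≤ n - 2 ∧ x.1 = n - 2 - j := ⟨n - 2 - x.1, by omega, by omega⟩
    have h' : n - 2 - j < n := by omega
    have hmain := main j hjle h'
    have hxe : x = ⟨n - 2 - j, h'⟩ := Fin.ext hj
    rw [hj, hxe]
    exact hmain

/-- the number of (⊙,∨)-derivations on the n-element MV-chain is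
(n-1)(n+2)/2. -/
theorem stmt9 (n : ℕ) (hn : 2 ≤ n) :
    Nat.card {d : Fin n → Fin n // IsChainDer d} = (n - 1) * (n + 2) / 2 := by
  let g : (Σ k : Fin (n - 1), Fin (n - k.1)) → {d : Fin n → Fin n // IsChainDer d} :=
    fun p => ⟨fun x => if x.1 = n - 1 then ⟨p.2.1, by have := p.2.2; have := p.1.2; omega⟩
      else ⟨x.1 - p.1.1, by have := x.2; omega⟩,
      der_form hn p.1.1 p.2.1 (by have := p.1.2; omega) (by have := p.2.2; have := p.1.2; omega)⟩
  have hbij : Function.Bijective g := by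
    constructor
    · rintro ⟨k1, c1⟩ ⟨k2, c2⟩ h
      have hfun := congrArg Subtype.val h
      have h2 := congrFun hfun ⟨n - 2, by omega⟩
      have h3 := congrFun hfun ⟨n - 1, by omega⟩
      have hne : ¬ (n - 2 = n - 1) := by omega
      simp only [g, hne, if_neg, if_pos] at h2 h3
      have e2 := congrArg Fin.val h2
      have e3 := congrArg Fin.val h3
      simp at e2 e3
      have hk1 := k1.2; have hk2 := k2.2
      have : k1 = k2 := Fin.ext (by omega)
      subst this
      exact congrArg (Sigma.mk k1) (Fin.ext e3)
    · rintro ⟨d, hd⟩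
      obtain ⟨k, c, hk, hc, hform⟩ := der_char hn d hd
      have hkn : k < n - 1 := by omega
      have hcn : c < n - ((⟨k, hkn⟩ : Fin (n - 1)) : ℕ) := by simp only [Fin.val_mk]; omega
      refine ⟨⟨⟨k, hkn⟩, ⟨c, hcn⟩⟩, ?_⟩
      apply Subtype.ext
      funext x
      apply Fin.ext
      simp only [g, Fin.val_mk]
      rw [hform x]
      split_ifs <;> rfl
  have hcard : Nat.card {d : Fin n → Fin n // IsChainDer d}
      = Nat.card (Σ k : Fin (n - 1), Fin (n - k.1)) :=
    (Nat.card_eq_of_bijective g hbij).symm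
  rw [hcard, Nat.card_eq_fintype_card, Fintype.card_sigma]
  simp only [Fintype.card_fin]
  rw [Fin.sum_univ_eq_sum_range (fun k => n - k) (n - 1)]
  rw [← Finset.sum_range_reflect (fun k => n - k) (n - 1)]
  have hre : ∀ j ∈ Finset.range (n - 1), n - (n - 1 - 1 - j) = j + 2 := by
    intro j hj
    have := Finset.mem_range.mp hj
    omega
  rw [Finset.sum_congr rfl hre, Finset.sum_add_distrib, Finset.sum_const, Finset.card_range,
    smul_eq_mul]
  have hgauss := Finset.sum_range_id_mul_two (n - 1)
  obtain ⟨q, hq⟩ : ∃ q, ∑ i ∈ Finset.range (n - 1), i = q := ⟨_, rfl⟩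
  rw [hq] at hgauss ⊢
  have hmul : (n - 1) * (n + 2) = q * 2 + (n - 1) * 4 := by
    have h4 : n + 2 = (n - 1 - 1) + 4 := by omega
    rw [h4, Nat.mul_add, ← hgauss]
  rw [hmul]
  omega
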